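/- For a, b in (0,1], the set A = (1/2 - b/4, 1/2 + a/4] is forward invariant under f = f_{a,b}: if x ∈ A then f(x) ∈ A. -/
import Mathlib

noncomputable def fab (a b x : ℝ) : ℝ :=
  if x ≤ 1/2 then x * (1 + a - a * x) else x * (1 - b + b * x)

theorem stmt7 (a b : ℝ) (ha : a ∈ Set.Ioc (0:ℝ) 1) (hb : b ∈ Set.Ioc (0:ℝ) 1)
    (x : ℝ) (hx : x ∈ Set.Ioc (1/2 - b/4) (1/2 + a/4)) :
    fab a b x ∈ Set.Ioc (1/2 - b/4) (1/2 + a/4) := by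
  obtain ⟨ha0, ha1⟩ := ha
  obtain ⟨hb0, hb1⟩ := hb
  obtain ⟨hx1, hx2⟩ := hx
  unfold fab
  split_ifs with h
  · constructor
    · nlinarith [mul_nonneg (mul_nonneg ha0.le (by nlinarith : (0:ℝ) ≤ x)) (by linarith : (0:ℝ) ≤ 1 - x)]
    · nlinarith [sq_nonneg (x - 1/2), mul_pos ha0 (by nlinarith : (0:ℝ) < x)]
  · push_neg at h
    constructor
    · nlinarith [sq_nonneg (x - 1/2), mul_pos hb0 (by linarith : (0:ℝ) < x - 1/2)]
    · nlinarith [mul_pos hb0 (mul_pos (by linarith : (0:ℝ) < x) (by nlinarith : (0:ℝ) < 1 - x))]
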